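/- Let P be an n-element poset and L a labeling of P. Then L is a periodic point of extended promotion (i.e., ∂^k(L) = L for some integer k ≥ 1) if and only if L is a linear extension of P. -/

import Mathlib

open scoped Classical

noncomputable section

abbrev Labeling (P : Type*) [Fintype P] : Type _ := P ≃ Fin (Fintype.card P)

variable {P : Type*} [Fintype P] [PartialOrder P]

def IsLinearExt (L : Labeling P) : Prop := ∀ x y : P, x ≤ y → L x ≤ L y

def lSucc (L : Labeling P) (v : P)
    (h : (Finset.univ.filter fun y => v < y).Nonempty) : P :=
  L.symm (((Finset.univ.filter fun y => v < y).image L).min' (h.image _))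

lemma lt_lSucc (L : Labeling P) (v : P)
    (h : (Finset.univ.filter fun y => v < y).Nonempty) : v < lSucc L v h := by
  have hmem := Finset.min'_mem ((Finset.univ.filter fun y => v < y).image L) (h.image _)
  obtain ⟨y, hy, hLy⟩ := Finset.mem_image.mp hmem
  have heq : lSucc L v h = y := by
    unfold lSucc
    rw [← hLy, Equiv.symm_apply_apply]
  rw [heq]
  exact (Finset.mem_filter.mp hy).2

def promChainFrom (L : Labeling P) (v : P) : List P :=
  if h : (Finset.univ.filter fun y => v < y).Nonempty then
    v :: promChainFrom L (lSucc L v h)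
  else [v]
termination_by (Finset.univ.filter fun y => v < y).card
decreasing_by
  apply Finset.card_lt_card
  refine (Finset.ssubset_iff_of_subset ?_).mpr ?_
  · intro z hz
    simp only [Finset.mem_filter, Finset.mem_univ, true_and] at *
    exact lt_trans (lt_lSucc L v h) hz
  · exact ⟨lSucc L v h, by simp [lt_lSucc L v h], by simp⟩

def promote (L : Labeling P) : Labeling P :=
  if h : Nonempty P then
    ((List.formPerm (promChainFrom L (L.symm ⟨0, @Fintype.card_pos P _ h⟩))).trans L).trans
      (finRotate (Fintype.card P)).symm
  else L

/-- The label of `x` under `L`, as an integer in `{1, …, n}`. -/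
def labelOf (L : Labeling P) (x : P) : ℕ := (L x : ℕ) + 1

/-- The largest `a ∈ {0, …, n}` such that for all `j ∈ {n−a+1, …, n}`, the set
`{x ∈ P : j ≤ L(x) ≤ n}` is an upper order ideal of `P`. -/
def frozenA (L : Labeling P) : ℕ :=
  sSup {a : ℕ | a ≤ Fintype.card P ∧
    ∀ j, Fintype.card P - a + 1 ≤ j → j ≤ Fintype.card P →
      IsUpperSet {x : P | j ≤ labelOf L x ∧ labelOf L x ≤ Fintype.card P}}

/-- `x` is frozen with respect to `L` if `n − a + 1 ≤ L(x) ≤ n`, where `a` is as in `frozenA`. -/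
def IsFrozen (L : Labeling P) (x : P) : Prop :=
  Fintype.card P - frozenA L + 1 ≤ labelOf L x

/-- A labeling of an `n`-element poset is tangled if `n ≥ 2` and `∂^{n−2}(L)` is
not a linear extension. -/
def IsTangled (L : Labeling P) : Prop :=
  2 ≤ Fintype.card P ∧ ¬ IsLinearExt (promote^[Fintype.card P - 2] L)

/-- A labeling of an `n`-element poset is `k`-untangled if `n ≥ k + 2` and
`∂^{n−k−2}(L)` is not a linear extension. -/
def IsUntangled (k : ℕ) (L : Labeling P) : Prop :=
  k + 2 ≤ Fintype.card P ∧ ¬ IsLinearExt (promote^[Fintype.card P - k - 2] L)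

/-- The comparability graph of a poset. -/
def compGraph (P : Type*) [PartialOrder P] : SimpleGraph P where
  Adj x y := x ≠ y ∧ (x ≤ y ∨ y ≤ x)
  symm := by
    constructor
    intro x y hxy
    exact ⟨hxy.1.symm, hxy.2.symm⟩
  loopless := by
    constructor
    intro x hx
    exact hx.1 rfl

/-- The standardization of an injective map from a finite type into a linear order:
the unique relabeling by `{1, …, n}` with the same relative order of values. -/
def standardize {R β : Type*} [Fintype R] [LinearOrder β]
    (f : R → β) (hf : Function.Injective f) : R ≃ Fin (Fintype.card R) :=
  have hcard : (Finset.univ.image f).card = Fintype.card R := by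
    rw [Finset.card_image_of_injective _ hf, Finset.card_univ]
  (Equiv.ofBijective (fun x => (⟨f x, by simp⟩ : ↥(Finset.univ.image f)))
    (by
      rw [Fintype.bijective_iff_injective_and_card]
      refine ⟨fun a b hab => hf (congrArg Subtype.val hab), ?_⟩
      rw [Fintype.card_coe, hcard])).trans
    ((Finset.univ.image f).orderIsoOfFin hcard).symm.toEquiv

/-- The toggle operator `τ_{k+1}`: it swaps the labels `k+1` and `k+2` (i.e. the
`Fin`-labels `k` and `k+1`) unless `L⁻¹(k+1) <_P L⁻¹(k+2)`. -/
def toggle (L : Labeling P) (k : ℕ) : Labeling P :=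
  if h : k + 1 < Fintype.card P then
    if L.symm ⟨k, Nat.lt_of_succ_lt h⟩ < L.symm ⟨k + 1, h⟩ then L
    else L.trans (Equiv.swap ⟨k, Nat.lt_of_succ_lt h⟩ ⟨k + 1, h⟩)
  else L

/-- An element `x` is `L`-golden if every element strictly above it has a larger label. -/
def IsGolden (L : Labeling P) (x : P) : Prop := ∀ y : P, x < y → L x < L y

/-- The largest label `n` of an `n`-element poset, as an element of `Fin n`. -/
def topFin (P : Type*) [Fintype P] [Nonempty P] : Fin (Fintype.card P) :=
  ⟨Fintype.card P - 1, Nat.sub_lt Fintype.card_pos Nat.one_pos⟩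

section AuxChain

variable {P : Type*} [Fintype P] [PartialOrder P]
set_option linter.unusedSectionVars false

lemma promChainFrom_cons (L : Labeling P) (v : P) :
    ∃ t, promChainFrom L v = v :: t := by
  rw [promChainFrom]
  split
  · exact ⟨_, rfl⟩
  · exact ⟨[], rfl⟩

lemma promChainFrom_ne_nil (L : Labeling P) (v : P) : promChainFrom L v ≠ [] := by
  obtain ⟨t, ht⟩ := promChainFrom_cons L v
  simp [ht]

lemma promChainFrom_head? (L : Labeling P) (v : P) :
    (promChainFrom L v).head? = some v := by
  obtain ⟨t, ht⟩ := promChainFrom_cons L v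
  simp [ht]

lemma promChainFrom_chain' (L : Labeling P) (v : P) :
    List.Chain' (fun x y => ∃ h, y = lSucc L x h) (promChainFrom L v) := by
  induction v using promChainFrom.induct L with
  | case1 v h ih =>
    rw [promChainFrom, dif_pos h]
    simp only [List.Chain', List.isChain_cons]
    refine ⟨?_, ih⟩
    intro y hy
    rw [promChainFrom_head? L] at hy
    exact ⟨h, (Option.some_inj.mp hy).symm⟩
  | case2 v h =>
    rw [promChainFrom, dif_neg h]
    exact List.isChain_singleton _

lemma promChainFrom_sorted (L : Labeling P) (v : P) :
    List.Pairwise (· < ·) (promChainFrom L v) :=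
  List.isChain_iff_pairwise.mp
    ((promChainFrom_chain' L v).imp (by rintro a b ⟨h, rfl⟩; exact lt_lSucc L a h))

lemma promChainFrom_nodup (L : Labeling P) (v : P) : (promChainFrom L v).Nodup :=
  (promChainFrom_sorted L v).imp ne_of_lt

lemma promChainFrom_getLast_max (L : Labeling P) (v : P) (y : P) :
    ¬ ((promChainFrom L v).getLast (promChainFrom_ne_nil L v) < y) := by
  induction v using promChainFrom.induct L with
  | case1 v h ih =>
    intro hy
    apply ih
    have hc : promChainFrom L v = v :: promChainFrom L (lSucc L v h) := by
      rw [promChainFrom, dif_pos h]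
    rw [List.getLast_congr _ (by simp) hc, List.getLast_cons (promChainFrom_ne_nil _ _)] at hy
    exact hy
  | case2 v h =>
    intro hy
    have hc : promChainFrom L v = [v] := by rw [promChainFrom, dif_neg h]
    rw [List.getLast_congr _ (by simp) hc] at hy
    simp at hy
    exact h ⟨y, by simp [hy]⟩

lemma lSucc_le (L : Labeling P) (v z : P) (h) (hz : v < z) : L (lSucc L v h) ≤ L z := by
  unfold lSucc
  rw [Equiv.apply_symm_apply]
  exact Finset.min'_le _ _ (Finset.mem_image_of_mem _ (by simp [hz]))

/-- The promotion chain starting at the element labeled `0`. -/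
def pchain [Nonempty P] (L : Labeling P) : List P :=
  promChainFrom L (L.symm ⟨0, Fintype.card_pos⟩)

lemma finRotate_symm_of_ne_zero {n : ℕ} (w : Fin n) (hw : (w : ℕ) ≠ 0) :
    ((finRotate n).symm w : ℕ) + 1 = (w : ℕ) := by
  obtain ⟨m, rfl⟩ : ∃ m, n = m + 1 := ⟨n - 1, by omega⟩
  have hwlt : (w : ℕ) - 1 < m := by omega
  have hr : (finRotate (m + 1)).symm w = ⟨(w : ℕ) - 1, by omega⟩ := by
    rw [Equiv.symm_apply_eq, finRotate_of_lt hwlt]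
    ext
    simp
    omega
  rw [hr]
  simp
  omega

lemma finRotate_symm_of_zero {n : ℕ} (w : Fin n) (hw : (w : ℕ) = 0) :
    ((finRotate n).symm w : ℕ) = n - 1 := by
  obtain ⟨m, rfl⟩ : ∃ m, n = m + 1 := ⟨n - 1, by omega⟩
  have hr : (finRotate (m + 1)).symm w = ⟨m, by omega⟩ := by
    rw [Equiv.symm_apply_eq, finRotate_last']
    ext
    simp [hw]
  rw [hr]
  simp

variable [Nonempty P] (L : Labeling P)

lemma promote_apply (x : P) :
    promote L x = (finRotate (Fintype.card P)).symm (L ((pchain L).formPerm x)) := by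
  rw [promote, dif_pos ‹Nonempty P›]
  rfl

lemma head_mem_pchain : L.symm ⟨0, Fintype.card_pos⟩ ∈ pchain L := by
  obtain ⟨t, ht⟩ := promChainFrom_cons L (L.symm ⟨0, Fintype.card_pos⟩)
  rw [pchain, ht]
  exact List.mem_cons_self

lemma pchain_getElem_zero (h : 0 < (pchain L).length) :
    (pchain L)[0] = L.symm ⟨0, Fintype.card_pos⟩ := by
  obtain ⟨t, ht⟩ := promChainFrom_cons L (L.symm ⟨0, Fintype.card_pos⟩)
  simp only [pchain, ht, List.getElem_cons_zero]

lemma label_ne_zero_of_ne_head {x : P} (hx : x ≠ L.symm ⟨0, Fintype.card_pos⟩) :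
    (L x : ℕ) ≠ 0 := by
  intro h0
  apply hx
  rw [← Equiv.symm_apply_apply L x]
  congr 1
  ext
  exact h0

lemma Mval_not_mem {x : P} (hx : x ∉ pchain L) :
    (promote L x : ℕ) + 1 = (L x : ℕ) := by
  rw [promote_apply, List.formPerm_apply_of_notMem hx]
  exact finRotate_symm_of_ne_zero _
    (label_ne_zero_of_ne_head L (fun h => hx (h ▸ head_mem_pchain L)))

lemma Mval_getElem (i : ℕ) (h : i + 1 < (pchain L).length) :
    (promote L ((pchain L)[i]'(Nat.lt_of_succ_lt h)) : ℕ) + 1 =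
      (L ((pchain L)[i + 1]'h) : ℕ) := by
  rw [promote_apply, List.formPerm_apply_getElem _ (by exact promChainFrom_nodup L _) i _]
  have hmod : (i + 1) % (pchain L).length = i + 1 := Nat.mod_eq_of_lt h
  simp only [hmod]
  apply finRotate_symm_of_ne_zero
  apply label_ne_zero_of_ne_head
  intro heq
  have h0 : 0 < (pchain L).length := by omega
  have : (pchain L)[i + 1]'h = (pchain L)[0] := by rw [heq, pchain_getElem_zero L h0]
  have := (List.Nodup.getElem_inj_iff (promChainFrom_nodup L _)).mp this
  omega

lemma Mval_getLast :
    (promote L ((pchain L).getLast (promChainFrom_ne_nil L _)) : ℕ) =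
      Fintype.card P - 1 := by
  rw [promote_apply]
  have hlen : 0 < (pchain L).length := List.length_pos_iff.mpr (promChainFrom_ne_nil L _)
  erw [List.getLast_eq_getElem,
    List.formPerm_apply_getElem (pchain L) (by exact promChainFrom_nodup L _)
      ((pchain L).length - 1) (by omega)]
  have hmod : ((pchain L).length - 1 + 1) % (pchain L).length = 0 := by
    have : (pchain L).length - 1 + 1 = (pchain L).length := by omega
    simp [this]
  simp only [hmod]
  rw [pchain_getElem_zero L hlen]
  apply finRotate_symm_of_zero
  simp

lemma pchain_lt_of_index {i j : ℕ} (hij : i < j) (hj : j < (pchain L).length) :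
    (pchain L)[i]'(hij.trans hj) < (pchain L)[j]'hj := by
  have := List.pairwise_iff_get.mp (promChainFrom_sorted L _) ⟨i, hij.trans hj⟩ ⟨j, hj⟩ hij
  simpa [pchain] using this

lemma pchain_succ_min (i : ℕ) (h : i + 1 < (pchain L).length) (z : P)
    (hz : (pchain L)[i]'(Nat.lt_of_succ_lt h) < z) :
    L ((pchain L)[i + 1]'h) ≤ L z := by
  have hc := List.isChain_iff_getElem.mp
    (promChainFrom_chain' L (L.symm ⟨0, Fintype.card_pos⟩)) i
    (show i + 1 < (pchain L).length by omega)
  obtain ⟨hne, heq⟩ := hc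
  simp only [pchain]
  erw [heq]
  exact lSucc_le L _ z hne hz

end AuxChain

section Freeze

variable {P : Type*} [Fintype P] [PartialOrder P]
set_option linter.unusedSectionVars false

/-- The top `a` labels of `L` form a "frozen" configuration. -/
def Cond (L : Labeling P) (a : ℕ) : Prop :=
  ∀ t : ℕ, Fintype.card P - a + 1 ≤ t → IsUpperSet {x : P | t ≤ (L x : ℕ) + 1}

lemma cond_zero (L : Labeling P) : Cond L 0 := by
  intro t ht x y hxy hx
  exfalso
  simp only [Set.mem_setOf_eq] at hx
  have := (L x).isLt
  omega

lemma cond_step [Nonempty P] (L : Labeling P) (a : ℕ) (hL : Cond L a) :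
    Cond (promote L) (a + 1) := by
  intro t ht x y hxy hx
  simp only [Set.mem_setOf_eq] at hx ⊢
  rcases eq_or_lt_of_le hxy with rfl | hlt
  · exact hx
  have ht' : Fintype.card P - a + 1 ≤ t + 1 := by omega
  have htn : t ≤ Fintype.card P := by
    have := (promote L x).isLt
    omega
  have hcard : 1 ≤ Fintype.card P := Fintype.card_pos
  -- Everything `≥ y` has `L`-label at least `t` (i.e. lies in `S_{t+1}(L)`).
  have hA : ∀ z : P, y ≤ z → t + 1 ≤ (L z : ℕ) + 1 := by
    intro z hz
    have hxz : x < z := lt_of_lt_of_le hlt hz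
    by_cases hxc : x ∈ pchain L
    · obtain ⟨i, hi, hxi⟩ := List.mem_iff_getElem.mp hxc
      rcases eq_or_lt_of_le (Nat.succ_le_of_lt hi) with hlast | hsucc
      · exfalso
        have hx' : x = (pchain L).getLast (promChainFrom_ne_nil L _) := by
          erw [List.getLast_eq_getElem, ← hxi]
          congr 1
          omega
        exact promChainFrom_getLast_max L _ z (hx' ▸ hxz)
      · have hMx := Mval_getElem L i hsucc
        rw [hxi] at hMx
        have hmin : (L ((pchain L)[i + 1]'hsucc) : ℕ) ≤ (L z : ℕ) :=
          pchain_succ_min L i hsucc z (by rw [hxi]; exact hxz)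
        omega
    · have hMx := Mval_not_mem L hxc
      have hmem : x ∈ {w : P | t + 1 ≤ (L w : ℕ) + 1} := by
        simp only [Set.mem_setOf_eq]
        omega
      have := hL (t + 1) ht' (le_of_lt hxz) hmem
      simpa using this
  -- Now analyze `y`.
  by_cases hyc : y ∈ pchain L
  · obtain ⟨k, hk, hyk⟩ := List.mem_iff_getElem.mp hyc
    rcases eq_or_lt_of_le (Nat.succ_le_of_lt hk) with hklast | hksucc
    · have hy' : y = (pchain L).getLast (promChainFrom_ne_nil L _) := by
        erw [List.getLast_eq_getElem, ← hyk]
        congr 1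
        omega
      have hMy := Mval_getLast L
      rw [← hy'] at hMy
      omega
    · have hMy := Mval_getElem L k hksucc
      rw [hyk] at hMy
      have hka : y ≤ (pchain L)[k + 1]'hksucc := by
        rw [← hyk]
        exact le_of_lt (pchain_lt_of_index L (Nat.lt_succ_self k) hksucc)
      have := hA _ hka
      omega
  · have hMy := Mval_not_mem L hyc
    have := hA y le_rfl
    omega

end Freeze

section Sorting

variable {P : Type*} [Fintype P] [PartialOrder P]
set_option linter.unusedSectionVars false

lemma cond_card_iff (L : Labeling P) (a : ℕ) (ha : Fintype.card P ≤ a) :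
    Cond L a ↔ IsLinearExt L := by
  constructor
  · intro hC x y hxy
    have h1 : Fintype.card P - a + 1 ≤ (L x : ℕ) + 1 := by omega
    have hm := hC ((L x : ℕ) + 1) h1 hxy (by simp)
    simp only [Set.mem_setOf_eq] at hm
    exact Fin.le_def.mpr (by omega)
  · intro hLE t ht x y hxy hx
    simp only [Set.mem_setOf_eq] at hx ⊢
    have h2 := Fin.le_def.mp (hLE x y hxy)
    omega

lemma cond_iterate [Nonempty P] (L : Labeling P) (k : ℕ) : Cond (promote^[k] L) k := by
  induction k with
  | zero => exact cond_zero _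
  | succ k ih =>
    rw [Function.iterate_succ_apply']
    exact cond_step _ k ih

lemma promote_linearExt [Nonempty P] (L : Labeling P) (h : IsLinearExt L) :
    IsLinearExt (promote L) := by
  have h1 := cond_step L (Fintype.card P) ((cond_card_iff L _ le_rfl).mpr h)
  exact (cond_card_iff _ _ (by omega)).mp h1

lemma promote_iterate_linearExt [Nonempty P] (L : Labeling P) (h : IsLinearExt L) (k : ℕ) :
    IsLinearExt (promote^[k] L) := by
  induction k with
  | zero => exact h
  | succ k ih =>
    rw [Function.iterate_succ_apply']
    exact promote_linearExt _ ih

lemma promote_of_not_nonempty (h : ¬ Nonempty P) (L : Labeling P) : promote L = L := by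
  rw [promote, dif_neg h]

end Sorting

section Demotion

variable {P : Type*} [Fintype P] [PartialOrder P]
set_option linter.unusedSectionVars false

/-- The demotion successor: the element below `v` with the largest label. -/
def dSucc (M : Labeling P) (v : P)
    (h : (Finset.univ.filter fun y => y < v).Nonempty) : P :=
  M.symm (((Finset.univ.filter fun y => y < v).image M).max' (h.image _))

lemma dSucc_lt (M : Labeling P) (v : P)
    (h : (Finset.univ.filter fun y => y < v).Nonempty) : dSucc M v h < v := by
  have hmem := Finset.max'_mem ((Finset.univ.filter fun y => y < v).image M) (h.image _)
  obtain ⟨y, hy, hLy⟩ := Finset.mem_image.mp hmem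
  have heq : dSucc M v h = y := by
    unfold dSucc
    rw [← hLy, Equiv.symm_apply_apply]
  rw [heq]
  exact (Finset.mem_filter.mp hy).2

/-- The demotion chain starting at `v`, going downwards greedily by largest label. -/
def demChainFrom (M : Labeling P) (v : P) : List P :=
  if h : (Finset.univ.filter fun y => y < v).Nonempty then
    v :: demChainFrom M (dSucc M v h)
  else [v]
termination_by (Finset.univ.filter fun y => y < v).card
decreasing_by
  apply Finset.card_lt_card
  refine (Finset.ssubset_iff_of_subset ?_).mpr ?_
  · intro z hz
    simp only [Finset.mem_filter, Finset.mem_univ, true_and] at *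
    exact lt_trans hz (dSucc_lt M v h)
  · exact ⟨dSucc M v h, by simp [dSucc_lt M v h], by simp⟩

lemma demChain_pchain [Nonempty P] (L : Labeling P) (hLE : IsLinearExt L) :
    ∀ (i : ℕ) (hi : i < (pchain L).length),
      demChainFrom (promote L) ((pchain L)[i]'hi) = ((pchain L).take (i + 1)).reverse := by
  intro i
  induction i with
  | zero =>
    intro hi
    have hne : ¬ (Finset.univ.filter fun y => y < (pchain L)[0]'hi).Nonempty := by
      rintro ⟨y, hy⟩
      simp only [Finset.mem_filter, Finset.mem_univ, true_and] at hy
      rw [pchain_getElem_zero L hi] at hy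
      have h1 := Fin.le_def.mp (hLE y _ (le_of_lt hy))
      simp only [Equiv.apply_symm_apply] at h1
      have h0 : (L y : ℕ) = 0 := by omega
      have : y = L.symm ⟨0, Fintype.card_pos⟩ := by
        rw [← Equiv.symm_apply_apply L y]
        congr 1
        ext
        exact h0
      rw [this] at hy
      exact lt_irrefl _ hy
    rw [demChainFrom, dif_neg hne]
    rw [List.take_succ]
    simp [List.getElem?_eq_getElem hi]
  | succ i ih =>
    intro hi
    have hi' : i < (pchain L).length := Nat.lt_of_succ_lt hi
    have hlt : (pchain L)[i]'hi' < (pchain L)[i + 1]'hi :=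
      pchain_lt_of_index L (Nat.lt_succ_self i) hi
    have hne : (Finset.univ.filter fun y => y < (pchain L)[i + 1]'hi).Nonempty :=
      ⟨(pchain L)[i]'hi', by simp [hlt]⟩
    rw [demChainFrom, dif_pos hne]
    have hd : dSucc (promote L) ((pchain L)[i + 1]'hi) hne = (pchain L)[i]'hi' := by
      unfold dSucc
      rw [Equiv.symm_apply_eq]
      apply le_antisymm
      · apply Finset.max'_le
        intro w hw
        obtain ⟨y, hy, rfl⟩ := Finset.mem_image.mp hw
        simp only [Finset.mem_filter, Finset.mem_univ, true_and] at hy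
        rw [Fin.le_def]
        by_cases hyc : y ∈ pchain L
        · obtain ⟨j, hj, hyj⟩ := List.mem_iff_getElem.mp hyc
          have hji : j ≤ i := by
            by_contra hcon
            push_neg at hcon
            rcases eq_or_lt_of_le (Nat.lt_iff_add_one_le.mp hcon) with rfl | hlt2
            · rw [hyj] at hy
              exact lt_irrefl _ hy
            · have := pchain_lt_of_index L hlt2 hj
              rw [hyj] at this
              exact lt_asymm hy this
          rcases eq_or_lt_of_le hji with rfl | hjlt
          · rw [hyj]
          · have hj1 : j + 1 < (pchain L).length := by omega
            have e1 := Mval_getElem L j hj1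
            have e2 := Mval_getElem L i hi
            rw [hyj] at e1
            have hle : (L ((pchain L)[j + 1]'hj1) : ℕ) ≤ (L ((pchain L)[i + 1]'hi) : ℕ) := by
              rcases eq_or_lt_of_le (Nat.succ_le_succ hjlt) with heq | hlt3
              · have : (pchain L)[j + 1]'hj1 = (pchain L)[i]'hi' := by
                  congr 1
                  omega
                rw [this]
                exact Fin.le_def.mp (hLE _ _ (le_of_lt hlt))
              · exact Fin.le_def.mp
                  (hLE _ _ (le_of_lt (pchain_lt_of_index L (by omega : j + 1 < i + 1) hi)))
            omega
        · have e1 := Mval_not_mem L hyc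
          have e2 := Mval_getElem L i hi
          have hle : (L y : ℕ) ≤ (L ((pchain L)[i + 1]'hi) : ℕ) :=
            Fin.le_def.mp (hLE _ _ (le_of_lt hy))
          omega
      · exact Finset.le_max' _ _ (Finset.mem_image_of_mem _ (by simp [hlt]))
    have htake : List.take (i + 1 + 1) (pchain L) =
        List.take (i + 1) (pchain L) ++ [(pchain L)[i + 1]'hi] := by
      rw [List.take_succ, List.getElem?_eq_getElem hi]
      rfl
    rw [hd, ih hi', htake, List.reverse_append]
    simp

lemma demChain_top [Nonempty P] (L : Labeling P) (hLE : IsLinearExt L) :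
    demChainFrom (promote L)
        ((promote L).symm ⟨Fintype.card P - 1, by have := Fintype.card_pos (α := P); omega⟩) =
      (pchain L).reverse := by
  have hlen : 0 < (pchain L).length := List.length_pos_iff.mpr (promChainFrom_ne_nil L _)
  have hlast : (promote L).symm
      ⟨Fintype.card P - 1, by have := Fintype.card_pos (α := P); omega⟩ =
      (pchain L).getLast (promChainFrom_ne_nil L _) := by
    rw [Equiv.symm_apply_eq]
    ext
    exact (Mval_getLast L).symm
  erw [hlast, List.getLast_eq_getElem]
  have h1 := demChain_pchain L hLE ((pchain L).length - 1) (by omega)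
  rw [h1]
  congr 1
  have : (pchain L).length - 1 + 1 = (pchain L).length := by omega
  rw [this, List.take_length]

lemma promote_injOn_LE [Nonempty P] {L L' : Labeling P}
    (hL : IsLinearExt L) (hL' : IsLinearExt L') (h : promote L = promote L') : L = L' := by
  have hch : pchain L = pchain L' := by
    have e1 := demChain_top L hL
    have e2 := demChain_top L' hL'
    rw [h] at e1
    exact (List.reverse_injective (e1.symm.trans e2)).symm ▸ rfl
  apply Equiv.ext
  intro z
  have h1 := promote_apply L (((pchain L).formPerm).symm z)
  have h2 := promote_apply L' (((pchain L).formPerm).symm z)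
  rw [Equiv.apply_symm_apply] at h1
  rw [← hch, Equiv.apply_symm_apply] at h2
  have h3 : promote L (((pchain L).formPerm).symm z) =
      promote L' (((pchain L).formPerm).symm z) := by rw [h]
  rw [h1, h2] at h3
  exact (finRotate (Fintype.card P)).symm.injective h3

end Demotion

/-- A labeling is a periodic point of extended promotion if and only
if it is a linear extension. -/
theorem periodic_iff_linearExt (L : Labeling P) :
    (∃ k : ℕ, 1 ≤ k ∧ promote^[k] L = L) ↔ IsLinearExt L := by
  by_cases hP : Nonempty P
  · constructor
    · rintro ⟨k, hk1, hk⟩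
      have hiter : promote^[k * Fintype.card P] L = L := by
        rw [Function.iterate_mul]
        exact Function.iterate_fixed hk _
      have hcond := cond_iterate L (k * Fintype.card P)
      rw [hiter] at hcond
      refine (cond_card_iff L _ ?_).mp hcond
      have := Nat.mul_le_mul_right (Fintype.card P) hk1
      omega
    · intro hLE
      have key : ∀ i j : ℕ, i < j → promote^[i] L = promote^[j] L →
          ∃ k, 1 ≤ k ∧ promote^[k] L = L := by
        intro i j hlt hij
        refine ⟨j - i, by omega, ?_⟩
        have hinj : ∀ (m : ℕ) (A B : Labeling P), IsLinearExt A → IsLinearExt B →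
            promote^[m] A = promote^[m] B → A = B := by
          intro m
          induction m with
          | zero => intro A B _ _ h; exact h
          | succ m ihm =>
            intro A B hA hB h
            rw [Function.iterate_succ_apply, Function.iterate_succ_apply] at h
            have h2 := ihm _ _ (promote_linearExt _ hA) (promote_linearExt _ hB) h
            exact promote_injOn_LE hA hB h2
        apply hinj i _ _ (promote_iterate_linearExt L hLE _) hLE
        rw [← Function.iterate_add_apply]
        have hadd : i + (j - i) = j := by omega
        rw [hadd, ← hij]
      obtain ⟨i, j, hne, hij⟩ :=
        Finite.exists_ne_map_eq_of_infinite (fun k : ℕ => promote^[k] L)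
      rcases hne.lt_or_gt with h | h
      · exact key i j h hij
      · exact key j i h hij.symm
  · constructor
    · intro _ x y _
      exact absurd ⟨x⟩ hP
    · intro _
      exact ⟨1, le_rfl, by simp [promote_of_not_nonempty hP]⟩

end
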